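/- Let N ≥ 8 be an even integer, y ∈ ℂ nonzero, and Δ = −(y + 1/y)/2. Let r ∈ ℂ be nonzero with r + 1/r ≠ 2Δ and suppose r satisfies r^N − 3Δ r^{N−1} + 2Δ²(r^{N−2} + r²) − 3Δ r + 1 = 0. Set σ = (4 − 2Δ(r + 1/r))/(r + 1/r − 2Δ). Then the polynomial z² − σz + 1 divides, in ℂ[z], the polynomial H(z) = (z − y)^{N−1}(zy³ − 1)(z²y⁴ − σ z y² + 1) + (zy − 1)^{N−1}(z − y³)(z² − σ z y² + y⁴). -/

import Mathlib

open Polynomial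

lemma n4_aux (M : ℕ) (hM : Even M) (y r Δ σ t : ℂ)
    (hΔ2 : 2*Δ*y = -(y^2+1))
    (hroot' : r^M*(r^2 - 3*Δ*r + 2*Δ^2) + (2*Δ^2*r^2 - 3*Δ*r + 1) = 0)
    (hry : r+y ≠ 0)
    (ht : (r+y)*t = 1+r*y)
    (hσt : σ*t = t^2+1) :
    (t-y)^(M+1)*(t*y^3-1)*(t^2*y^4-σ*t*y^2+1)
      + (t*y-1)^(M+1)*(t-y^3)*(t^2-σ*t*y^2+y^4) = 0 := by
  have e1 : (r+y)*(t-y) = 1-y^2 := by linear_combination ht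
  have e2 : (r+y)*(t*y-1) = r*(y^2-1) := by linear_combination y*ht
  have e3 : (r+y)*(t*y^3-1) = (y^2-1)*y*(1-2*Δ*r) := by
    linear_combination y^3*ht + (r*(y^2-1))*hΔ2
  have e4 : (r+y)*(t*y+1) = 2*y*(1-Δ*r) := by linear_combination y*ht + r*hΔ2
  have e5 : (r+y)*(t-y^3) = (1-y^2)*y*(r-2*Δ) := by
    linear_combination ht + (1-y^2)*hΔ2
  have e6 : (r+y)*(t+y) = 2*y*(r-Δ) := by linear_combination ht + hΔ2
  have hP : t*y-1 = -(r*(t-y)) := by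
    apply mul_left_cancel₀ hry
    linear_combination (y+r)*ht
  have hpow : (t*y-1)^(M+1) = -(r^(M+1)*(t-y)^(M+1)) := by
    rw [hP, (hM.add_one).neg_pow, mul_pow]
  have p1 : (r+y)^3*((t*y^3-1)*((t*y-1)*(t*y+1)))
      = ((y^2-1)*y*(1-2*Δ*r))*((r*(y^2-1))*(2*y*(1-Δ*r))) := by
    calc (r+y)^3*((t*y^3-1)*((t*y-1)*(t*y+1)))
        = ((r+y)*(t*y^3-1))*(((r+y)*(t*y-1))*((r+y)*(t*y+1))) := by ring
      _ = _ := by rw [e3, e2, e4]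
  have p2 : (r+y)^3*((t-y^3)*((t-y)*(t+y)))
      = ((1-y^2)*y*(r-2*Δ))*((1-y^2)*(2*y*(r-Δ))) := by
    calc (r+y)^3*((t-y^3)*((t-y)*(t+y)))
        = ((r+y)*(t-y^3))*(((r+y)*(t-y))*((r+y)*(t+y))) := by ring
      _ = _ := by rw [e5, e1, e6]
  have key : (r+y)^3 * ((t*y^3-1)*((y^2-1)*((t*y-1)*(t*y+1)))
      - r^(M+1)*((t-y^3)*((1-y^2)*((t-y)*(t+y))))) = 0 := by
    linear_combination (y^2-1)*p1 - (r^(M+1)*(1-y^2))*p2 + (2*r*y^2*(y^2-1)^3)*hroot'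
  have hB : (t*y^3-1)*((y^2-1)*((t*y-1)*(t*y+1)))
      - r^(M+1)*((t-y^3)*((1-y^2)*((t-y)*(t+y)))) = 0 :=
    (mul_eq_zero.1 key).resolve_left (pow_ne_zero _ hry)
  rw [hpow]
  linear_combination (t-y)^(M+1)*hB
    + (-(y^2)*(t-y)^(M+1)*(t*y^3-1) + y^2*r^(M+1)*(t-y)^(M+1)*(t-y^3))*hσt

/-- trivial case `y^2 = 1`: the quadratic is literally a factor. -/
lemma n4_trivial (n : ℕ) (y σ : ℂ) (hy2 : y^2 = 1) :
    (X^2 - C σ * X + 1 : Polynomial ℂ) ∣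
      ((X - C y)^n * (X * C y^3 - 1) * (X^2 * C y^4 - C σ * X * C y^2 + 1)
        + (X * C y - 1)^n * (X - C y^3) * (X^2 - C σ * X * C y^2 + C y^4)) := by
  have hC2 : (C y : Polynomial ℂ)^2 = 1 := by rw [← map_pow, hy2, map_one]
  have hC4 : (C y : Polynomial ℂ)^4 = 1 := by
    rw [show (4:ℕ) = 2*2 from rfl, pow_mul, hC2, one_pow]
  refine ⟨(X - C y)^n * (X * C y^3 - 1) + (X * C y - 1)^n * (X - C y^3), ?_⟩
  rw [hC2, hC4]; ring

/-- For even `N ≥ 8`, `y ≠ 0`, `Δ = −(y + 1/y)/2`, and `r ≠ 0` a root of the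
reciprocal polynomial `r^N − 3Δr^(N−1) + 2Δ²(r^(N−2)+r²) − 3Δr + 1` with
`r + 1/r ≠ 2Δ`, setting `σ = (4 − 2Δ(r + 1/r))/(r + 1/r − 2Δ)`, the polynomial
`z² − σz + 1` divides
`H(z) = (z−y)^(N−1)(zy³−1)(z²y⁴−σzy²+1) + (zy−1)^(N−1)(z−y³)(z²−σzy²+y⁴)`
in `ℂ[z]`. -/
theorem n4_boundPair_divisibility (N : ℕ) (hN : 8 ≤ N) (hNeven : Even N)
    (y : ℂ) (hy : y ≠ 0) (Δ : ℂ) (hΔ : Δ = -(y + 1/y)/2)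
    (r : ℂ) (hr : r ≠ 0) (hden : r + 1/r ≠ 2*Δ)
    (hroot : r^N - 3*Δ*r^(N-1) + 2*Δ^2*(r^(N-2) + r^2) - 3*Δ*r + 1 = 0)
    (σ : ℂ) (hσ : σ = (4 - 2*Δ*(r + 1/r))/(r + 1/r - 2*Δ)) :
    (X^2 - C σ * X + 1 : Polynomial ℂ) ∣
      ((X - C y)^(N-1) * (X * C y^3 - 1) * (X^2 * C y^4 - C σ * X * C y^2 + 1)
        + (X * C y - 1)^(N-1) * (X - C y^3) * (X^2 - C σ * X * C y^2 + C y^4)) := by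
  obtain ⟨M, rfl⟩ : ∃ M, N = M + 2 := ⟨N - 2, by omega⟩
  have hM : Even M := by rcases hNeven with ⟨k, hk⟩; exact ⟨k-1, by omega⟩
  simp only [show M + 2 - 1 = M + 1 from rfl, show M + 2 - 2 = M from rfl] at hroot ⊢
  -- basic facts
  have hΔ2 : 2*Δ*y = -(y^2+1) := by rw [hΔ]; field_simp [hy]
  have hd0 : r + 1/r - 2*Δ ≠ 0 := sub_ne_zero.2 hden
  have hry : r + y ≠ 0 := by
    intro h
    apply hden
    have hr' : r = -y := by linear_combination h
    rw [hr', hΔ]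
    field_simp [hy]
    ring
  have hry2 : 1 + r*y ≠ 0 := by
    intro h
    apply hden
    have h1 : r = -(1/y) := by field_simp [hy]; linear_combination h
    rw [h1, hΔ]
    field_simp [hy]
    ring
  have hroot' : r^M*(r^2 - 3*Δ*r + 2*Δ^2) + (2*Δ^2*r^2 - 3*Δ*r + 1) = 0 := by
    linear_combination hroot
  set t : ℂ := (1 + r*y)/(r + y) with ht_def
  set u : ℂ := (r + y)/(1 + r*y) with hu_def
  have ht : (r+y)*t = 1+r*y := by rw [ht_def]; field_simp
  have hu : (r⁻¹+y)*u = 1+r⁻¹*y := by rw [hu_def]; field_simp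
  have htu : t*u = 1 := by rw [ht_def, hu_def]; field_simp
  have hsum : t + u = σ := by
    have hq : σ * (r + 1/r - 2*Δ) = 4 - 2*Δ*(r+1/r) := by
      rw [hσ, div_mul_cancel₀ _ hd0]
    have hq2 : σ * (r^2 + 1 - 2*Δ*r) = 4*r - 2*Δ*(r^2+1) := by
      have h := hq
      field_simp at h
      linear_combination h
    rw [ht_def, hu_def]
    field_simp
    linear_combination (-y)*hq2 + (r^2+1-σ*r)*hΔ2
  have hσt : σ*t = t^2+1 := by linear_combination (-t)*hsum + htu
  have hσu : σ*u = u^2+1 := by linear_combination (-u)*hsum + htu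
  by_cases hc : t = u
  · -- degenerate case: double root
    rw [ht_def, hu_def, div_eq_div_iff hry hry2] at hc
    have h4 : ((1-r)*(1-y))*((1+r)*(1+y)) = 0 := by linear_combination hc
    rcases mul_eq_zero.1 h4 with h|h
    · rcases mul_eq_zero.1 h with h|h
      · -- r = 1
        have hr1 : r = 1 := by linear_combination -h
        rw [hr1] at hroot'
        have hΔeq : 4*Δ^2 - 6*Δ + 2 = 0 := by linear_combination hroot'
        have hyy : (y^2+y+1)*((y+1)^2) = 0 := by
          linear_combination y^2*hΔeq + (y^2+1-2*Δ*y+3*y)*hΔ2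
        have hy1 : y + 1 ≠ 0 := by
          intro h'
          apply hry2
          rw [hr1]
          linear_combination h'
        have hyq : y^2+y+1 = 0 :=
          (mul_eq_zero.1 hyy).resolve_right (pow_ne_zero _ hy1)
        have hy3 : y^3 = 1 := by linear_combination (y-1)*hyq
        have ht1 : t = 1 := by
          apply mul_left_cancel₀ hry
          rw [ht, hr1]; ring
        have hu1 : u = 1 := by rw [ht1] at htu; linear_combination htu
        have hσ2 : σ = 2 := by rw [← hsum, ht1, hu1]; norm_num
        have hC3 : (C y : Polynomial ℂ)^3 = 1 := by rw [← map_pow, hy3, map_one]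
        rw [hσ2]
        have hC2' : (C (2:ℂ) : Polynomial ℂ) = 2 := map_ofNat C 2
        set G : Polynomial ℂ := (X - C y)^(M+1)*(X^2*(C y)^4 - 2*X*(C y)^2 + 1)
            + (X*C y - 1)^(M+1)*(X^2 - 2*X*(C y)^2 + (C y)^4) with hG
        have hHfac : (X - C y)^(M+1) * (X * C y^3 - 1) * (X^2 * C y^4 - C (2:ℂ) * X * C y^2 + 1)
            + (X * C y - 1)^(M+1) * (X - C y^3) * (X^2 - C (2:ℂ) * X * C y^2 + C y^4)
            = (X - 1) * G := by rw [hG, hC2', hC3]; ring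
        have hsgn : (y-1:ℂ)^(M+1) = -((1-y)^(M+1)) := by
          rw [show (y-1:ℂ) = -(1-y) by ring, (hM.add_one).neg_pow]
        have hroot1 : IsRoot G 1 := by
          simp only [hG, IsRoot, eval_add, eval_mul, eval_pow, eval_sub, eval_one,
            eval_X, eval_C, eval_ofNat]
          linear_combination (1-2*y^2+y^4)*hsgn
        have hdvdG : (X - 1 : Polynomial ℂ) ∣ G := by
          have h' := dvd_iff_isRoot.2 hroot1
          simpa using h'
        have hquad : (X^2 - C (2:ℂ)*X + 1 : Polynomial ℂ) = (X-1)*(X-1) := by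
          rw [hC2']; ring
        rw [hquad, hHfac]
        exact mul_dvd_mul_left _ hdvdG
      · -- y = 1
        exact n4_trivial (M+1) y σ (by rw [show y = 1 by linear_combination -h]; norm_num)
    · rcases mul_eq_zero.1 h with h|h
      · -- r = -1
        have hr1 : r = -1 := by linear_combination h
        rw [hr1] at hroot'
        rw [hM.neg_one_pow] at hroot'
        have hΔeq : 4*Δ^2 + 6*Δ + 2 = 0 := by linear_combination hroot'
        have hyy : (y^2-y+1)*((y-1)^2) = 0 := by
          linear_combination y^2*hΔeq + (y^2+1-2*Δ*y-3*y)*hΔ2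
        have hy1 : y - 1 ≠ 0 := by
          intro h'
          apply hry
          rw [hr1]
          linear_combination h'
        have hyq : y^2-y+1 = 0 :=
          (mul_eq_zero.1 hyy).resolve_right (pow_ne_zero _ hy1)
        have hy3 : y^3 = -1 := by linear_combination (y+1)*hyq
        have ht1 : t = -1 := by
          apply mul_left_cancel₀ hry
          rw [ht, hr1]; ring
        have hu1 : u = -1 := by rw [ht1] at htu; linear_combination -htu
        have hσ2 : σ = -2 := by rw [← hsum, ht1, hu1]; norm_num
        have hC3 : (C y : Polynomial ℂ)^3 = -1 := by rw [← map_pow, hy3, map_neg, map_one]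
        rw [hσ2]
        have hC2' : (C (-2:ℂ) : Polynomial ℂ) = -2 := by
          rw [show (-2:ℂ) = -(2:ℂ) by norm_num, map_neg, map_ofNat]
        set G : Polynomial ℂ := -((X - C y)^(M+1)*(X^2*(C y)^4 + 2*X*(C y)^2 + 1))
            + (X*C y - 1)^(M+1)*(X^2 + 2*X*(C y)^2 + (C y)^4) with hG
        have hHfac : (X - C y)^(M+1) * (X * C y^3 - 1) * (X^2 * C y^4 - C (-2:ℂ) * X * C y^2 + 1)
            + (X * C y - 1)^(M+1) * (X - C y^3) * (X^2 - C (-2:ℂ) * X * C y^2 + C y^4)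
            = (X + 1) * G := by rw [hG, hC2', hC3]; ring
        have hsgn : ((-1:ℂ)*y-1)^(M+1) = (-1-y)^(M+1) := by
          rw [show ((-1:ℂ)*y-1) = (-1-y)+(1-y)*0 by ring]
          ring_nf
        have hroot1 : IsRoot G (-1) := by
          simp only [hG, IsRoot, eval_add, eval_mul, eval_pow, eval_sub, eval_one,
            eval_X, eval_C, eval_ofNat, eval_neg]
          linear_combination (1-2*y^2+y^4)*hsgn
        have hdvdG : (X + 1 : Polynomial ℂ) ∣ G := by
          have h' := dvd_iff_isRoot.2 hroot1
          simpa using h'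
        have hquad : (X^2 - C (-2:ℂ)*X + 1 : Polynomial ℂ) = (X+1)*(X+1) := by
          rw [hC2']; ring
        rw [hquad, hHfac]
        exact mul_dvd_mul_left _ hdvdG
      · -- y = -1
        exact n4_trivial (M+1) y σ (by rw [show y = -1 by linear_combination h]; norm_num)
  · -- generic case: distinct roots t, u
    have hrinv : r⁻¹ + y ≠ 0 := by
      intro h
      apply hry2
      have := mul_eq_zero_of_right r h
      field_simp at this
      linear_combination this
    have hrootInv : (r⁻¹)^M*((r⁻¹)^2 - 3*Δ*r⁻¹ + 2*Δ^2) + (2*Δ^2*(r⁻¹)^2 - 3*Δ*r⁻¹ + 1) = 0 := by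
      rw [inv_pow]
      field_simp
      linear_combination hroot'
    have evalt := n4_aux M hM y r Δ σ t hΔ2 hroot' hry ht hσt
    have evalu := n4_aux M hM y r⁻¹ Δ σ u hΔ2 hrootInv hrinv hu hσu
    have hdvd1 : (X - C t) ∣ ((X - C y)^(M+1) * (X * C y^3 - 1) * (X^2 * C y^4 - C σ * X * C y^2 + 1)
        + (X * C y - 1)^(M+1) * (X - C y^3) * (X^2 - C σ * X * C y^2 + C y^4) : Polynomial ℂ) := by
      rw [dvd_iff_isRoot]
      simp only [IsRoot, eval_add, eval_mul, eval_pow, eval_sub, eval_one, eval_X, eval_C]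
      linear_combination evalt
    have hdvd2 : (X - C u) ∣ ((X - C y)^(M+1) * (X * C y^3 - 1) * (X^2 * C y^4 - C σ * X * C y^2 + 1)
        + (X * C y - 1)^(M+1) * (X - C y^3) * (X^2 - C σ * X * C y^2 + C y^4) : Polynomial ℂ) := by
      rw [dvd_iff_isRoot]
      simp only [IsRoot, eval_add, eval_mul, eval_pow, eval_sub, eval_one, eval_X, eval_C]
      linear_combination evalu
    have hcop : IsCoprime (X - C t) (X - C u : Polynomial ℂ) :=
      isCoprime_X_sub_C_of_isUnit_sub (isUnit_iff_ne_zero.2 (sub_ne_zero.2 hc))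
    have hfac : (X^2 - C σ * X + 1 : Polynomial ℂ) = (X - C t) * (X - C u) := by
      have hh : ((X - C t) * (X - C u) : Polynomial ℂ)
          = X^2 - C (t+u) * X + C (t*u) := by rw [C_add, C_mul]; ring
      rw [hh, hsum, htu, map_one]
    rw [hfac]
    exact hcop.mul_dvd hdvd1 hdvd2
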